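/- For every language L over Σ, ((L⁺)ᶜ⁺)ᶜ⁺ differs from (L⁺)ᶜ⁺ᶜ by at most the empty word; more weakly, the closure of any language under the two operations K ↦ Kᶜ and K ↦ K⁺ contains at most finitely many languages up to membership of ε. -/

import Mathlib

open scoped Computability symmDiff

/-- The positive Kleene closure `L⁺` of a language. -/
def Language.plus {α : Type*} (L : Language α) : Language α := L * L∗

/-- Languages expressible from L by complement and positive closure. -/
inductive Language.ExprCP {α : Type*} (L : Language α) : Language α → Prop
  | base : Language.ExprCP L L
  | compl {K : Language α} : Language.ExprCP L K → Language.ExprCP L Kᶜ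
  | plus {K : Language α} : Language.ExprCP L K → Language.ExprCP L K.plus

namespace PlusAux

variable {α : Type*}

lemma mem_plus {K : Language α} {w : List α} :
    w ∈ K.plus ↔ ∃ S : List (List α), S ≠ [] ∧ (∀ y ∈ S, y ∈ K) ∧ S.flatten = w := by
  constructor
  · rintro ⟨a, ha, b, hb, rfl⟩
    rcases Language.mem_kstar.mp hb with ⟨S, rfl, hS⟩
    refine ⟨a :: S, by simp, ?_, by simp⟩
    intro y hy
    rcases List.mem_cons.mp hy with rfl | hy'
    · exact ha
    · exact hS y hy'
  · rintro ⟨S, hne, hmem, rfl⟩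
    rcases S with _ | ⟨a, S⟩
    · exact absurd rfl hne
    · exact ⟨a, hmem a (by simp), S.flatten,
        Language.join_mem_kstar fun y hy => hmem y (by simp [hy]), by simp⟩

lemma flatten_mem {A : Language α} (hA : A * A ≤ A) :
    ∀ S : List (List α), S ≠ [] → (∀ y ∈ S, y ∈ A) → S.flatten ∈ A := by
  intro S
  induction S with
  | nil => intro h; exact absurd rfl h
  | cons a S ih =>
    intro _ hmem
    rcases S with _ | ⟨b, S⟩
    · simpa using hmem a (by simp)
    · have h1 : a ∈ A := hmem a (by simp)
      have h2 : (b :: S).flatten ∈ A := ih (by simp) fun y hy => hmem y (by simp [hy])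
      have h3 : a ++ (b :: S).flatten ∈ A := hA ⟨a, h1, (b :: S).flatten, h2, rfl⟩
      simpa using h3

lemma plus_eq_self {A : Language α} (hA : A * A ≤ A) : A.plus = A := by
  apply le_antisymm
  · intro w hw
    rcases mem_plus.mp hw with ⟨S, hne, hmem, rfl⟩
    exact flatten_mem hA S hne hmem
  · intro w hw
    exact mem_plus.mpr ⟨[w], by simp, by have hw' : w ∈ A := hw; simpa using hw', by simp⟩

lemma plus_mul_self (K : Language α) : K.plus * K.plus ≤ K.plus := by
  rintro w ⟨u, hu, v, hv, rfl⟩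
  rcases mem_plus.mp hu with ⟨Su, hSu, hmu, rfl⟩
  rcases mem_plus.mp hv with ⟨Sv, hSv, hmv, rfl⟩
  refine mem_plus.mpr ⟨Su ++ Sv, by simp [hSu], ?_, by simp⟩
  intro y hy
  rcases List.mem_append.mp hy with h | h
  · exact hmu y h
  · exact hmv y h

lemma plus_plus (K : Language α) : (K.plus).plus = K.plus :=
  plus_eq_self (plus_mul_self K)

lemma join_split : ∀ (S : List (List α)) (u v : List α), u ++ v = S.flatten → S ≠ [] →
    ∃ S₁ w₁ w₂ S₂, S = S₁ ++ (w₁ ++ w₂) :: S₂ ∧ u = S₁.flatten ++ w₁ ∧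
      v = w₂ ++ S₂.flatten := by
  intro S
  induction S with
  | nil => intro u v _ h; exact absurd rfl h
  | cons x S ih =>
    intro u v h _
    have h' : u ++ v = x ++ S.flatten := by simpa using h
    rcases List.append_eq_append_iff.mp h' with ⟨a', hx, hv⟩ | ⟨c', hu, hS⟩
    · exact ⟨[], u, a', S, by simp [hx], by simp, hv⟩
    · rcases S with _ | ⟨b, S⟩
      · have hc : c' = [] ∧ v = [] := by simpa using hS.symm
        refine ⟨[], u, [], [], ?_, by simp, by simp [hc.2]⟩
        simp [hu, hc.1]
      · obtain ⟨S₁, w₁, w₂, S₂, hS', hc', hv'⟩ := ih c' v hS.symm (by simp)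
        exact ⟨x :: S₁, w₁, w₂, S₂, by simp [hS'], by simp [hu, hc'], hv'⟩

/-- The key lemma: if `A` is closed under concatenation, then so is `((Aᶜ)⁺)ᶜ`. -/
lemma compl_plus_compl_mul {A : Language α} (hA : A * A ≤ A) :
    ((Aᶜ).plus)ᶜ * ((Aᶜ).plus)ᶜ ≤ ((Aᶜ).plus)ᶜ := by
  rintro w ⟨u, hu, v, hv, rfl⟩
  intro hw
  rcases mem_plus.mp hw with ⟨S, hne, hmem, hjoin⟩
  obtain ⟨S₁, w₁, w₂, S₂, hS, hu', hv'⟩ := join_split S u v hjoin.symm hne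
  have h1 : w₁ ∈ A := by
    by_contra h
    refine hu (mem_plus.mpr ⟨S₁ ++ [w₁], by simp, ?_, by simp [hu']⟩)
    intro y hy
    rcases List.mem_append.mp hy with hy | hy
    · exact hmem y (by simp [hS, hy])
    · simp only [List.mem_singleton] at hy
      exact hy ▸ h
  have h2 : w₂ ∈ A := by
    by_contra h
    refine hv (mem_plus.mpr ⟨w₂ :: S₂, by simp, ?_, by simp [hv']⟩)
    intro y hy
    rcases List.mem_cons.mp hy with rfl | hy'
    · exact h
    · exact hmem y (by simp [hS, hy'])
  have h3 : w₁ ++ w₂ ∈ A := hA ⟨w₁, h1, w₂, h2, rfl⟩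
  have h4 : w₁ ++ w₂ ∈ Aᶜ := hmem _ (by simp [hS])
  exact h4 h3

lemma cpc_plus {A : Language α} (hA : A * A ≤ A) :
    (((Aᶜ).plus)ᶜ).plus = ((Aᶜ).plus)ᶜ :=
  plus_eq_self (compl_plus_compl_mul hA)

end PlusAux

/-- ((L⁺)ᶜ⁺)ᶜ⁺ differs from (L⁺)ᶜ⁺ᶜ by at most the empty word, and the closure
of any language under complement and positive closure is finite up to
membership of ε. -/
theorem plus_complement_closure_finite {α : Type*} (L : Language α) :
    (((((L.plus)ᶜ).plus)ᶜ).plus ∆ (((L.plus)ᶜ).plus)ᶜ ≤ (1 : Language α)) ∧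
    ∃ F : Set (Language α), F.Finite ∧
      ∀ K : Language α, L.ExprCP K → ∃ M ∈ F, K ∆ M ≤ (1 : Language α) := by
  constructor
  · rw [PlusAux.cpc_plus (PlusAux.plus_mul_self L), symmDiff_self]
    exact bot_le
  · refine ⟨{L, L.plus, Lᶜ, (Lᶜ).plus, (L.plus)ᶜ, ((L.plus)ᶜ).plus, ((Lᶜ).plus)ᶜ,
      (((Lᶜ).plus)ᶜ).plus, (((L.plus)ᶜ).plus)ᶜ, ((((Lᶜ).plus)ᶜ).plus)ᶜ}, ?_, ?_⟩
    · apply Set.Finite.insert; apply Set.Finite.insert; apply Set.Finite.insert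
      apply Set.Finite.insert; apply Set.Finite.insert; apply Set.Finite.insert
      apply Set.Finite.insert; apply Set.Finite.insert; apply Set.Finite.insert
      exact Set.finite_singleton _
    · intro K hK
      have hmem : K ∈ ({L, L.plus, Lᶜ, (Lᶜ).plus, (L.plus)ᶜ, ((L.plus)ᶜ).plus,
          ((Lᶜ).plus)ᶜ, (((Lᶜ).plus)ᶜ).plus, (((L.plus)ᶜ).plus)ᶜ,
          ((((Lᶜ).plus)ᶜ).plus)ᶜ} : Set (Language α)) := by
        induction hK with
        | base => simp
        | compl h ih =>
          rcases ih with rfl | rfl | rfl | rfl | rfl | rfl | rfl | rfl | rfl | rfl <;>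
            simp [compl_compl]
        | plus h ih =>
          rcases ih with rfl | rfl | rfl | rfl | rfl | rfl | rfl | rfl | rfl | rfl <;>
            simp [PlusAux.plus_plus, PlusAux.cpc_plus (PlusAux.plus_mul_self _)]
      exact ⟨K, hmem, by rw [symmDiff_self]; exact bot_le⟩
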